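/- Let 0 < α < 1, let F be α-SR, and let r > 0 be a monopoly price of F, i.e. φ(r) = 0. Then for every v ≥ r with F(v) < 1, the revenue curve satisfies (1−F(v))·v ≤ (1−F(r))·r · (1/(1−α)) · ( ((1−F(v))/(1−F(r)))^α − α·(1−F(v))/(1−F(r)) ). (In quantile notation with R(q) = q·v(q): for q ≤ q(r), R(q) ≤ R(q(r)) · (1/(1−α)) · ((q/q(r))^α − α·q/q(r)).) -/

import Mathlib

open MeasureTheory Real Filter

/-- The virtual valuation function `φ(v) = v − (1 − F(v))/f(v)`. -/
noncomputable def virtualValue (F f : ℝ → ℝ) (v : ℝ) : ℝ := v - (1 - F v) / f v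

/-- The hazard rate `h(v) = f(v)/(1 − F(v))`. -/
noncomputable def hazardRate (F f : ℝ → ℝ) (v : ℝ) : ℝ := f v / (1 - F v)

/-- `F` is the CDF of a continuous distribution supported on `[0, ∞)`,
with density `f = F'` that is positive wherever `F < 1`. -/
structure IsCDF (F f : ℝ → ℝ) : Prop where
  zero : F 0 = 0
  mono : Monotone F
  le_one : ∀ v, F v ≤ 1
  tendsto_one : Tendsto F atTop (nhds 1)
  hasDeriv : ∀ v, 0 ≤ v → HasDerivAt F (f v) v
  f_pos : ∀ v, 0 ≤ v → F v < 1 → 0 < f v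

/-- `F` is `α`-strongly regular: `φ(y) − φ(x) ≥ α (y − x)` for all `x < y` in the support. -/
def IsAlphaSR (α : ℝ) (F f : ℝ → ℝ) : Prop :=
  ∀ x y, 0 ≤ x → x < y → F y < 1 →
    virtualValue F f y - virtualValue F f x ≥ α * (y - x)

theorem revenue_curve_upper_bound (α : ℝ) (F f : ℝ → ℝ)
    (hα0 : 0 < α) (hα1 : α < 1)
    (hcdf : IsCDF F f) (hSR : IsAlphaSR α F f)
    (r : ℝ) (hr : 0 < r) (hmon : virtualValue F f r = 0)
    (v : ℝ) (hrv : r ≤ v) (hv : F v < 1) :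
    (1 - F v) * v ≤
      (1 - F r) * r * (1 / (1 - α)) *
        (((1 - F v) / (1 - F r)) ^ (α : ℝ) - α * ((1 - F v) / (1 - F r))) := by
  have h1α : (0:ℝ) < 1 - α := by linarith
  -- positivity facts on [r, v]
  have hFlt : ∀ x ∈ Set.Icc r v, F x < 1 := fun x hx =>
    lt_of_le_of_lt (hcdf.mono hx.2) hv
  have hxpos : ∀ x ∈ Set.Icc r v, 0 < x := fun x hx => lt_of_lt_of_le hr hx.1
  have hqpos : ∀ x ∈ Set.Icc r v, 0 < 1 - F x := fun x hx => by linarith [hFlt x hx]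
  have hApos : ∀ x ∈ Set.Icc r v, 0 < (1 - α) * x + α * r := fun x hx => by
    have := hxpos x hx; nlinarith
  -- the potential function g
  set g : ℝ → ℝ := fun x => Real.log (1 - F x) + (1 / (1 - α)) * Real.log ((1 - α) * x + α * r)
    with hg
  have hderiv : ∀ x ∈ Set.Icc r v,
      HasDerivAt g (-(f x) / (1 - F x) + (1 / (1 - α)) * ((1 - α) / ((1 - α) * x + α * r))) x := by
    intro x hx
    have h1 : HasDerivAt (fun x => 1 - F x) (-(f x)) x := by
      simpa using (hcdf.hasDeriv x (hxpos x hx).le).const_sub 1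
    have h2 : HasDerivAt (fun x => Real.log (1 - F x)) (-(f x) / (1 - F x)) x :=
      h1.log (ne_of_gt (hqpos x hx))
    have h3 : HasDerivAt (fun x => (1 - α) * x + α * r) (1 - α) x := by
      simpa using ((hasDerivAt_id x).const_mul (1 - α)).add_const (α * r)
    have h4 : HasDerivAt (fun x => Real.log ((1 - α) * x + α * r))
        ((1 - α) / ((1 - α) * x + α * r)) x := h3.log (ne_of_gt (hApos x hx))
    exact h2.add (h4.const_mul (1 / (1 - α)))
  -- the key differential inequality
  have hkey : ∀ x ∈ Set.Icc r v,
      -(f x) / (1 - F x) + (1 / (1 - α)) * ((1 - α) / ((1 - α) * x + α * r)) ≤ 0 := by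
    intro x hx
    have hfx : 0 < f x := hcdf.f_pos x (hxpos x hx).le (hFlt x hx)
    have hq : 0 < 1 - F x := hqpos x hx
    have hA : 0 < (1 - α) * x + α * r := hApos x hx
    have hφ : (1 - F x) / f x ≤ (1 - α) * x + α * r := by
      rcases eq_or_lt_of_le hx.1 with heq | hlt
      · simp only [virtualValue] at hmon
        rw [← heq]
        nlinarith [hmon]
      · have := hSR r x hr.le hlt (hFlt x hx)
        simp only [virtualValue] at this hmon
        nlinarith
    have h5 : 1 / ((1 - α) * x + α * r) ≤ f x / (1 - F x) := by
      rw [div_le_div_iff₀ hA hq]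
      calc 1 * (1 - F x) = ((1 - F x) / f x) * f x := by field_simp
        _ ≤ ((1 - α) * x + α * r) * f x := by
            exact mul_le_mul_of_nonneg_right hφ hfx.le
        _ = f x * ((1 - α) * x + α * r) := by ring
    have : (1 / (1 - α)) * ((1 - α) / ((1 - α) * x + α * r)) = 1 / ((1 - α) * x + α * r) := by
      field_simp
    rw [this, neg_div]
    linarith
  -- g is antitone on [r, v]
  have hanti : AntitoneOn g (Set.Icc r v) := by
    apply antitoneOn_of_deriv_nonpos (convex_Icc r v)
    · exact fun x hx => (hderiv x hx).continuousAt.continuousWithinAt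
    · intro x hx
      rw [interior_Icc] at hx
      exact (hderiv x (Set.Ioo_subset_Icc_self hx)).differentiableAt.differentiableWithinAt
    · intro x hx
      rw [interior_Icc] at hx
      have hx' := Set.Ioo_subset_Icc_self hx
      rw [(hderiv x hx').deriv]
      exact hkey x hx'
  have hgle : g v ≤ g r :=
    hanti (Set.left_mem_Icc.2 hrv) (Set.right_mem_Icc.2 hrv) hrv
  -- unpack the inequality
  set qv := 1 - F v with hqv
  set qr := 1 - F r with hqr
  have hqv0 : 0 < qv := hqpos v (Set.right_mem_Icc.2 hrv)
  have hqr0 : 0 < qr := hqpos r (Set.left_mem_Icc.2 hrv)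
  set t := qv / qr with ht
  have ht0 : 0 < t := div_pos hqv0 hqr0
  set A := (1 - α) * v + α * r with hA
  have hA0 : 0 < A := hApos v (Set.right_mem_Icc.2 hrv)
  have hgr : g r = Real.log qr + (1 / (1 - α)) * Real.log r := by
    simp only [hg]
    congr 2
    ring
  have hgle' : Real.log qv + (1 / (1 - α)) * Real.log A
      ≤ Real.log qr + (1 / (1 - α)) * Real.log r := by
    rw [← hgr]; exact hgle
  -- derive A ≤ r * t^(α-1)
  have hlogt : Real.log t = Real.log qv - Real.log qr :=
    Real.log_div (ne_of_gt hqv0) (ne_of_gt hqr0)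
  have hAB : A ≤ r * t ^ (α - 1 : ℝ) := by
    have hrt : 0 < r * t ^ (α - 1 : ℝ) := mul_pos hr (Real.rpow_pos_of_pos ht0 _)
    rw [← Real.log_le_log_iff hA0 hrt, Real.log_mul (ne_of_gt hr)
      (ne_of_gt (Real.rpow_pos_of_pos ht0 _)), Real.log_rpow ht0]
    have : Real.log A - Real.log r ≤ (1 - α) * (Real.log qr - Real.log qv) := by
      have := mul_le_mul_of_nonneg_left (by linarith [hgle'] :
        (1 / (1 - α)) * Real.log A - (1 / (1 - α)) * Real.log r
          ≤ Real.log qr - Real.log qv) h1α.le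
      calc Real.log A - Real.log r
          = (1 - α) * ((1 / (1 - α)) * Real.log A - (1 / (1 - α)) * Real.log r) := by
            field_simp
        _ ≤ (1 - α) * (Real.log qr - Real.log qv) := this
    have h7 : (α - 1) * Real.log t = (1 - α) * (Real.log qr - Real.log qv) := by
      rw [hlogt]; ring
    linarith
  -- combine
  have hqvt : qv = t * qr := by rw [ht, div_mul_cancel₀ qv (ne_of_gt hqr0)]
  have htpow : t * t ^ (α - 1 : ℝ) = t ^ (α : ℝ) := by
    have h := Real.rpow_add ht0 1 (α - 1)
    rw [Real.rpow_one, show (1:ℝ) + (α - 1) = α by ring] at h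
    exact h.symm
  have h1 : qv * A ≤ r * qr * t ^ (α : ℝ) := by
    calc qv * A ≤ qv * (r * t ^ (α - 1 : ℝ)) :=
          mul_le_mul_of_nonneg_left hAB hqv0.le
      _ = r * qr * (t * t ^ (α - 1 : ℝ)) := by rw [hqvt]; ring
      _ = r * qr * t ^ (α : ℝ) := by rw [htpow]
  -- final algebra
  have hfinal : (1 - α) * (qv * v) ≤ (1 - α) * (qr * r * (1 / (1 - α)) * (t ^ (α:ℝ) - α * t)) := by
    have hRHS : (1 - α) * (qr * r * (1 / (1 - α)) * (t ^ (α:ℝ) - α * t))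
        = qr * r * (t ^ (α:ℝ) - α * t) := by field_simp
    rw [hRHS]
    have hLHS : (1 - α) * (qv * v) = qv * A - α * r * qv := by rw [hA]; ring
    rw [hLHS, hqvt]
    nlinarith [h1]
  exact le_of_mul_le_mul_left hfinal h1α
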